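/- Let N = C₀ᵀC₀ + λ_min(A₀ᵀA₀)·I where C₀ = [A₀, A₀X₀] is m×(n+d), A₀ᵀA₀ is nonsingular, and eigenvalues are counted in ascending order. Then N is positive definite, N(X₀;−I) = λ_min(A₀ᵀA₀)(X₀;−I), the eigenvalues of N^{-1/2}C₀ᵀC₀N^{-1/2} satisfy λⱼ = 0 for j = 1,…,d and 1/2 ≤ λⱼ ≤ 1 for j = d+1,…,n+d, and consequently n/2 ≤ trace(C₀N⁻¹C₀ᵀ) ≤ n. -/

import Mathlib

noncomputable section
open Matrix

/-- Eigenvalues of a Hermitian matrix, sorted in ascending order. -/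
noncomputable def sortedEig {n : ℕ} {M : Matrix (Fin n) (Fin n) ℝ} (hM : M.IsHermitian) :
    Fin n → ℝ :=
  hM.eigenvalues ∘ Tuple.sort hM.eigenvalues

/-- The square root of a positive semidefinite matrix, as defined in the older Mathlib. -/
noncomputable def Matrix.PosSemidef.sqrt {n : Type*} [Fintype n] [DecidableEq n]
    {M : Matrix n n ℝ} (hM : M.PosSemidef) : Matrix n n ℝ :=
  hM.1.eigenvectorUnitary.1 * diagonal ((↑) ∘ Real.sqrt ∘ hM.1.eigenvalues) *
    (star hM.1.eigenvectorUnitary : Matrix n n ℝ)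
lemma Matrix.PosSemidef.sqrt_mul_self {n : Type*} [Fintype n] [DecidableEq n]
    {M : Matrix n n ℝ} (hM : M.PosSemidef) : hM.sqrt * hM.sqrt = M := by
  have hU : (star hM.1.eigenvectorUnitary : Matrix n n ℝ) * hM.1.eigenvectorUnitary = 1 :=
    Unitary.coe_star_mul_self _
  have hD : diagonal ((↑) ∘ Real.sqrt ∘ hM.1.eigenvalues) *
      diagonal ((↑) ∘ Real.sqrt ∘ hM.1.eigenvalues) =
      diagonal (RCLike.ofReal (K := ℝ) ∘ hM.1.eigenvalues) := by
    rw [diagonal_mul_diagonal]; congr 1; funext i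
    simp [Real.mul_self_sqrt (hM.eigenvalues_nonneg i)]
  unfold Matrix.PosSemidef.sqrt
  conv_rhs => rw [hM.1.spectral_theorem, Unitary.conjStarAlgAut_apply, ← hD]
  simp only [Matrix.mul_assoc]
  rw [← Matrix.mul_assoc (star hM.1.eigenvectorUnitary : Matrix n n ℝ)
    (hM.1.eigenvectorUnitary : Matrix n n ℝ), hU, Matrix.one_mul]
lemma Matrix.PosSemidef.posSemidef_sqrt {n : Type*} [Fintype n] [DecidableEq n]
    {M : Matrix n n ℝ} (hM : M.PosSemidef) : hM.sqrt.PosSemidef := by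
  have hd : (diagonal ((↑) ∘ Real.sqrt ∘ hM.1.eigenvalues) : Matrix n n ℝ).PosSemidef :=
    posSemidef_diagonal_iff.mpr fun i => Real.sqrt_nonneg _
  have h := hd.mul_mul_conjTranspose_same (hM.1.eigenvectorUnitary : Matrix n n ℝ)
  unfold Matrix.PosSemidef.sqrt
  rwa [star_eq_conjTranspose]

namespace NormAux

variable {k : ℕ}

lemma sortedEig_mono {M : Matrix (Fin k) (Fin k) ℝ} (hM : M.IsHermitian) :
    Monotone (sortedEig hM) := Tuple.monotone_sort _

lemma sortedEig_exists {M : Matrix (Fin k) (Fin k) ℝ} (hM : M.IsHermitian) (i : Fin k) :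
    ∃ j, sortedEig hM j = hM.eigenvalues i := by
  obtain ⟨j, hj⟩ := (Tuple.sort hM.eigenvalues).surjective i
  exact ⟨j, by simp [sortedEig, hj]⟩

lemma sortedEig_zero_le {M : Matrix (Fin k) (Fin k) ℝ} (hM : M.IsHermitian) (h0 : 0 < k)
    (i : Fin k) : sortedEig hM ⟨0, h0⟩ ≤ hM.eigenvalues i := by
  obtain ⟨j, hj⟩ := sortedEig_exists hM i
  exact hj ▸ sortedEig_mono hM (by simp [Fin.le_def])

lemma trace_eq_sum_eig {M : Matrix (Fin k) (Fin k) ℝ} (hM : M.IsHermitian) :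
    M.trace = ∑ i, hM.eigenvalues i := by
  conv_lhs => rw [hM.spectral_theorem, Unitary.conjStarAlgAut_apply]
  rw [Matrix.trace_mul_comm, ← Matrix.mul_assoc]
  have h1 : star (hM.eigenvectorUnitary : Matrix (Fin k) (Fin k) ℝ) *
      (hM.eigenvectorUnitary : Matrix (Fin k) (Fin k) ℝ) = 1 :=
    Unitary.coe_star_mul_self hM.eigenvectorUnitary
  rw [h1, Matrix.one_mul]
  simp [Matrix.trace_diagonal]

lemma quadform_lower {M : Matrix (Fin k) (Fin k) ℝ} (hM : M.IsHermitian) {c : ℝ}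
    (hc : ∀ i, c ≤ hM.eigenvalues i) (x : Fin k → ℝ) :
    c * (x ⬝ᵥ x) ≤ x ⬝ᵥ (M *ᵥ x) := by
  set U : Matrix (Fin k) (Fin k) ℝ := (hM.eigenvectorUnitary : Matrix (Fin k) (Fin k) ℝ) with hU
  have hUU : U * Uᴴ = 1 := by
    rw [← star_eq_conjTranspose]
    exact Unitary.coe_mul_star_self hM.eigenvectorUnitary
  have hps : (M - c • 1).PosSemidef := by
    have hd : (Matrix.diagonal (fun i => hM.eigenvalues i - c)).PosSemidef :=
      posSemidef_diagonal_iff.mpr fun i => sub_nonneg.mpr (hc i)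
    have h2 := hd.mul_mul_conjTranspose_same U
    have h3 : U * Matrix.diagonal (fun i => hM.eigenvalues i - c) * Uᴴ = M - c • 1 := by
      have hdd : Matrix.diagonal (fun i => hM.eigenvalues i - c)
          = Matrix.diagonal hM.eigenvalues - c • 1 := by
        rw [Matrix.smul_one_eq_diagonal, Matrix.diagonal_sub]
      rw [hdd, Matrix.mul_sub, Matrix.sub_mul]
      congr 1
      · conv_rhs => rw [hM.spectral_theorem]
        simp [hU, star_eq_conjTranspose]
      · rw [Matrix.mul_smul, Matrix.mul_one, Matrix.smul_mul, hUU]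
    rw [← h3]; exact h2
  have h4 := hps.dotProduct_mulVec_nonneg x
  rw [star_trivial, Matrix.sub_mulVec, dotProduct_sub, Matrix.smul_mulVec,
    Matrix.one_mulVec, dotProduct_smul] at h4
  simpa using sub_nonneg.mp h4

lemma dot_conjT_mul_self {p q : ℕ} (A : Matrix (Fin p) (Fin q) ℝ) (v : Fin q → ℝ) :
    v ⬝ᵥ ((Aᴴ * A) *ᵥ v) = (A *ᵥ v) ⬝ᵥ (A *ᵥ v) := by
  rw [← Matrix.mulVec_mulVec, Matrix.dotProduct_mulVec]
  congr 1
  have := Matrix.star_mulVec A v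
  rw [star_trivial, star_trivial] at this
  exact this.symm

lemma mono_zero_prefix {d : ℕ} {f : Fin k → ℝ} (hf : Monotone f)
    (hvals : ∀ j, f j = 0 ∨ 1 / 2 ≤ f j)
    (hcard : d ≤ (Finset.univ.filter (fun j => f j = 0)).card)
    {j : Fin k} (hj : (j : ℕ) < d) : f j = 0 := by
  set S := Finset.univ.filter (fun j : Fin k => f j = 0) with hS
  have hex : ∃ p ∈ S, (j : ℕ) ≤ (p : ℕ) := by
    by_contra h
    push_neg at h
    have hsub : S.image Fin.val ⊆ Finset.range j := by
      intro a ha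
      obtain ⟨p, hp, rfl⟩ := Finset.mem_image.mp ha
      exact Finset.mem_range.mpr (h p hp)
    have := Finset.card_le_card hsub
    rw [Finset.card_image_of_injective _ Fin.val_injective, Finset.card_range] at this
    omega
  obtain ⟨p, hp, hjp⟩ := hex
  have hp0 : f p = 0 := (Finset.mem_filter.mp hp).2
  have hle : f j ≤ f p := hf (by exact hjp)
  rcases hvals j with h | h
  · exact h
  · rw [hp0] at hle; linarith

lemma mono_half_suffix {d : ℕ} {f : Fin k → ℝ} (hf : Monotone f)
    (hvals : ∀ j, f j = 0 ∨ 1 / 2 ≤ f j)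
    (hcard : (Finset.univ.filter (fun j => f j = 0)).card ≤ d)
    {j : Fin k} (hj : d ≤ (j : ℕ)) : 1 / 2 ≤ f j := by
  rcases hvals j with h0 | h; swap
  · exact h
  exfalso
  have hsub : Finset.Iic j ⊆ Finset.univ.filter (fun p : Fin k => f p = 0) := by
    intro p hp
    have hpj : p ≤ j := Finset.mem_Iic.mp hp
    have hle : f p ≤ f j := hf hpj
    rw [h0] at hle
    rcases hvals p with h | h
    · simp [h]
    · linarith
  have := Finset.card_le_card hsub
  rw [Fin.card_Iic] at this
  omega

end NormAux

lemma le_one_bound {lam a b lmin : ℝ} (key : a = lam * (a + lmin * b)) (ha : 0 ≤ a)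
    (hb : 0 < b) (hlmin : 0 < lmin) : lam ≤ 1 := by
  nlinarith [mul_pos hlmin hb]

lemma half_bound {lam a b lmin : ℝ} (key : a = lam * (a + lmin * b)) (halb : lmin * b ≤ a)
    (hb : 0 < b) (hlmin : 0 < lmin) (hle1 : lam ≤ 1) : 1 / 2 ≤ lam := by
  nlinarith [mul_pos hlmin hb]

/-- Properties of the normalizing matrix N = C₀ᵀC₀ + λ_min(A₀ᵀA₀)·I, where
C₀ = [A₀, A₀X₀] and A₀ᵀA₀ is nonsingular: N is positive definite,
N(X₀;−I) = λ_min(A₀ᵀA₀)(X₀;−I), the eigenvalues of N^{-1/2}C₀ᵀC₀N^{-1/2} are 0 for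
the d smallest and lie in [1/2,1] for the rest, and n/2 ≤ trace(C₀N⁻¹C₀ᵀ) ≤ n. -/
theorem normalizer_properties {m n d : ℕ} (hn : 0 < n)
    (A₀ : Matrix (Fin m) (Fin n) ℝ) (X₀ : Matrix (Fin n) (Fin d) ℝ)
    (hA : IsUnit (A₀ᵀ * A₀).det) :
    let C₀ : Matrix (Fin m) (Fin (n + d)) ℝ :=
      Matrix.of fun i => Fin.append (A₀ i) ((A₀ * X₀) i)
    let lmin : ℝ := sortedEig (by simpa using Matrix.isHermitian_conjTranspose_mul_self A₀ : (A₀ᵀ * A₀).IsHermitian) ⟨0, hn⟩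
    let N : Matrix (Fin (n + d)) (Fin (n + d)) ℝ := C₀ᴴ * C₀ + lmin • 1
    let Xe : Matrix (Fin (n + d)) (Fin d) ℝ :=
      Matrix.of fun i j =>
        Fin.append (fun r : Fin n => X₀ r j) (fun r : Fin d => if r = j then (-1 : ℝ) else 0) i
    N.PosDef ∧
    N * Xe = lmin • Xe ∧
    (∀ (hN : N.PosSemidef)
        (hK : ((hN.sqrt)⁻¹ * (C₀ᴴ * C₀) * (hN.sqrt)⁻¹).IsHermitian),
      (∀ j : Fin (n + d), (j : ℕ) < d → sortedEig hK j = 0) ∧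
      (∀ j : Fin (n + d), d ≤ (j : ℕ) →
        1 / 2 ≤ sortedEig hK j ∧ sortedEig hK j ≤ 1)) ∧
    (n : ℝ) / 2 ≤ Matrix.trace (C₀ * N⁻¹ * C₀ᴴ) ∧
    Matrix.trace (C₀ * N⁻¹ * C₀ᴴ) ≤ (n : ℝ) := by
  intro C₀ lmin N Xe
  have hAAh : (A₀ᵀ * A₀).IsHermitian := by simpa using Matrix.isHermitian_conjTranspose_mul_self A₀
  have hAu : IsUnit (A₀ᵀ * A₀) := (Matrix.isUnit_iff_isUnit_det _).mpr hA
  have hAApd : (A₀ᵀ * A₀).PosDef := by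
    refine Matrix.PosDef.of_dotProduct_mulVec_pos hAAh fun x hx => ?_
    have hAx : A₀ *ᵥ x ≠ 0 := by
      intro h
      have h2 : (A₀ᵀ * A₀) *ᵥ x = 0 := by
        rw [← Matrix.mulVec_mulVec, h, Matrix.mulVec_zero]
      have h3 : (A₀ᵀ * A₀) *ᵥ (0 : Fin n → ℝ) = 0 := Matrix.mulVec_zero _
      exact hx (Matrix.mulVec_injective_iff_isUnit.mpr hAu (h2.trans h3.symm))
    have he : x ⬝ᵥ ((A₀ᵀ * A₀) *ᵥ x) = (A₀ *ᵥ x) ⬝ᵥ (A₀ *ᵥ x) := by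
      rw [← Matrix.conjTranspose_eq_transpose_of_trivial, ← Matrix.mulVec_mulVec,
        Matrix.dotProduct_mulVec]
      congr 1
      have := Matrix.star_mulVec A₀ x
      rw [star_trivial, star_trivial] at this
      exact this.symm
    rw [star_trivial, he]
    have := dotProduct_star_self_pos_iff.mpr hAx
    rwa [star_trivial] at this
  have hlmin : 0 < lmin := hAApd.eigenvalues_pos _
  have hCXe : C₀ * Xe = 0 := by
    ext i j
    rw [Matrix.mul_apply]
    show (∑ k : Fin (n + d), (Fin.append (A₀ i) ((A₀ * X₀) i)) k *
      (Fin.append (fun r : Fin n => X₀ r j)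
        (fun r : Fin d => if r = j then (-1 : ℝ) else 0)) k) = 0
    rw [Fin.sum_univ_add]
    simp only [Fin.append_left, Fin.append_right, mul_ite, mul_neg, mul_one, mul_zero]
    rw [Finset.sum_ite_eq' Finset.univ j (fun s => -(A₀ * X₀) i s)]
    simp [Matrix.mul_apply]
  have hMXe : (C₀ᴴ * C₀) * Xe = 0 := by rw [Matrix.mul_assoc, hCXe, Matrix.mul_zero]
  have hNXe : N * Xe = lmin • Xe := by
    show (C₀ᴴ * C₀ + lmin • 1) * Xe = lmin • Xe
    rw [Matrix.add_mul, hMXe, Matrix.smul_mul, Matrix.one_mul, zero_add]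
  have hMpsd : (C₀ᴴ * C₀).PosSemidef := Matrix.posSemidef_conjTranspose_mul_self C₀
  have hNpd : N.PosDef := by
    show (C₀ᴴ * C₀ + lmin • 1).PosDef
    refine Matrix.PosDef.posSemidef_add hMpsd ?_
    rw [Matrix.smul_one_eq_diagonal]
    exact Matrix.posDef_diagonal_iff.mpr fun _ => hlmin
  -- quadratic form lower bound for A₀ᵀA₀
  have hlmin_le : ∀ u : Fin n → ℝ, lmin * (u ⬝ᵥ u) ≤ u ⬝ᵥ ((A₀ᵀ * A₀) *ᵥ u) :=
    fun u => NormAux.quadform_lower hAAh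
      (NormAux.sortedEig_zero_le _ hn) u
  have spec : ∀ (hN : N.PosSemidef)
      (hK : ((hN.sqrt)⁻¹ * (C₀ᴴ * C₀) * (hN.sqrt)⁻¹).IsHermitian),
      (∀ j : Fin (n + d), (j : ℕ) < d → sortedEig hK j = 0) ∧
      (∀ j : Fin (n + d), d ≤ (j : ℕ) →
        1 / 2 ≤ sortedEig hK j ∧ sortedEig hK j ≤ 1) ∧
      Matrix.trace (C₀ * N⁻¹ * C₀ᴴ) = ∑ j, sortedEig hK j := by
    intro hN hK
    set S := hN.sqrt with hSdef
    have hS2 : S * S = N := hN.sqrt_mul_self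
    have hNdet : IsUnit N.det := hNpd.det_pos.ne'.isUnit
    have hSdet : IsUnit S.det := by
      refine isUnit_iff_ne_zero.mpr fun h0 => ?_
      have h : S.det * S.det = N.det := by rw [← Matrix.det_mul, hS2]
      rw [h0, mul_zero] at h
      exact hNpd.det_pos.ne' h.symm
    have hSidet : IsUnit (S⁻¹).det := Matrix.isUnit_nonsing_inv_det S hSdet
    have hNM : N = C₀ᴴ * C₀ + lmin • 1 := rfl
    -- per-eigenvalue dichotomy
    have hdich : ∀ i : Fin (n + d),
        (hK.eigenvalues i = 0 ∨ 1 / 2 ≤ hK.eigenvalues i) ∧ hK.eigenvalues i ≤ 1 := by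
      intro i
      set lam := hK.eigenvalues i with hlam
      set w : Fin (n + d) → ℝ :=
        (WithLp.equiv 2 ((_ : Fin (n + d)) → ℝ)) (hK.eigenvectorBasis i) with hwdef
      have heig : (S⁻¹ * (C₀ᴴ * C₀) * S⁻¹) *ᵥ w = lam • w := hK.mulVec_eigenvectorBasis i
      have hwne : w ≠ 0 := by
        have := hK.eigenvectorBasis.orthonormal.ne_zero i
        simpa [hwdef] using this
      set v : Fin (n + d) → ℝ := S⁻¹ *ᵥ w with hvdef
      have hwv : w = S *ᵥ v := by
        rw [hvdef, Matrix.mulVec_mulVec, Matrix.mul_nonsing_inv _ hSdet, Matrix.one_mulVec]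
      have hvne : v ≠ 0 := fun h => hwne (by rw [hwv, h, Matrix.mulVec_zero])
      have hMv : (C₀ᴴ * C₀) *ᵥ v = lam • (N *ᵥ v) := by
        have h1 : S *ᵥ ((S⁻¹ * (C₀ᴴ * C₀) * S⁻¹) *ᵥ w) = S *ᵥ (lam • w) := by rw [heig]
        have hL : S *ᵥ ((S⁻¹ * (C₀ᴴ * C₀) * S⁻¹) *ᵥ w) = (C₀ᴴ * C₀) *ᵥ v := by
          rw [Matrix.mulVec_mulVec]
          have hass : S * (S⁻¹ * (C₀ᴴ * C₀) * S⁻¹) = (C₀ᴴ * C₀) * S⁻¹ := by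
            rw [← Matrix.mul_assoc, ← Matrix.mul_assoc, Matrix.mul_nonsing_inv _ hSdet,
              Matrix.one_mul]
          rw [hass, ← Matrix.mulVec_mulVec, ← hvdef]
        have hR : S *ᵥ (lam • w) = lam • (N *ᵥ v) := by
          rw [Matrix.mulVec_smul, hwv, Matrix.mulVec_mulVec, hS2]
        rw [hL, hR] at h1
        exact h1
      have hNv' : N *ᵥ v = (C₀ᴴ * C₀) *ᵥ v + lmin • v := by
        rw [hNM, Matrix.add_mulVec, Matrix.smul_mulVec, Matrix.one_mulVec]
      have ha : 0 ≤ v ⬝ᵥ ((C₀ᴴ * C₀) *ᵥ v) := by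
        have := hMpsd.dotProduct_mulVec_nonneg v
        rwa [star_trivial] at this
      have hb : 0 < v ⬝ᵥ v := by
        have := dotProduct_star_self_pos_iff.mpr hvne
        rwa [star_trivial] at this
      set a := v ⬝ᵥ ((C₀ᴴ * C₀) *ᵥ v) with hadef
      set b := v ⬝ᵥ v with hbdef
      have hNvdot : v ⬝ᵥ (N *ᵥ v) = a + lmin * b := by
        rw [hNv', dotProduct_add, dotProduct_smul, smul_eq_mul]
      have key : a = lam * (a + lmin * b) := by
        have h2 := congrArg (fun u => v ⬝ᵥ u) hMv
        simp only [dotProduct_smul, smul_eq_mul] at h2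
        rw [hNvdot] at h2
        exact h2
      clear_value lam w v a b
      clear hwdef hvdef hwv heig
      have hle1 : lam ≤ 1 := le_one_bound key ha hb hlmin
      refine ⟨?_, hle1⟩
      by_cases hlam0 : lam = 0
      · exact Or.inl hlam0
      right
      -- orthogonality to the kernel
      have hXM : Xeᵀ * (C₀ᴴ * C₀) = 0 := by
        have hMs : (C₀ᴴ * C₀)ᵀ = C₀ᴴ * C₀ := by
          have := hMpsd.1
          rwa [Matrix.IsHermitian, Matrix.conjTranspose_eq_transpose_of_trivial] at this
        calc Xeᵀ * (C₀ᴴ * C₀) = Xeᵀ * (C₀ᴴ * C₀)ᵀ := by rw [hMs]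
        _ = ((C₀ᴴ * C₀) * Xe)ᵀ := by rw [Matrix.transpose_mul (C₀ᴴ * C₀) Xe]
        _ = 0 := by rw [hMXe, Matrix.transpose_zero]
      have h5 : Xeᵀ *ᵥ ((C₀ᴴ * C₀) *ᵥ v) = 0 := by
        rw [Matrix.mulVec_mulVec, hXM, Matrix.zero_mulVec]
      have h6 : (C₀ᴴ * C₀) *ᵥ v = lam • ((C₀ᴴ * C₀) *ᵥ v) + (lam * lmin) • v := by
        conv_lhs => rw [hMv, hNv']
        rw [smul_add, smul_smul]
      have h7 := congrArg (fun u => Xeᵀ *ᵥ u) h6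
      simp only [Matrix.mulVec_add, Matrix.mulVec_smul, h5, smul_zero, zero_add] at h7
      have horth : Xeᵀ *ᵥ v = 0 := by
        rcases smul_eq_zero.mp h7.symm with h | h
        · exact absurd h (mul_ne_zero hlam0 hlmin.ne')
        · exact h
      -- split v into components
      set x : Fin n → ℝ := fun r => v (Fin.castAdd d r) with hxdef
      set y : Fin d → ℝ := fun s => v (Fin.natAdd n s) with hydef
      have hXy : X₀ᵀ *ᵥ x = y := by
        funext s
        have h8 := congrFun horth s
        simp only [Matrix.mulVec, dotProduct, Matrix.transpose_apply, Pi.zero_apply,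
          Matrix.of_apply] at h8
        unfold Xe at h8
        rw [Fin.sum_univ_add] at h8
        simp only [Matrix.of_apply, Fin.append_left, Fin.append_right, ite_mul, neg_mul,
          one_mul, zero_mul, Finset.sum_ite_eq', Finset.mem_univ, if_true] at h8
        simp only [Matrix.mulVec, dotProduct, Matrix.transpose_apply, hxdef, hydef]
        linarith [h8]
      have hzv : C₀ *ᵥ v = A₀ *ᵥ (x + X₀ *ᵥ y) := by
        funext i2
        unfold C₀
        simp only [Matrix.mulVec, dotProduct, Matrix.of_apply, Pi.add_apply,
          Matrix.mul_apply, hxdef, hydef]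
        rw [Fin.sum_univ_add]
        simp only [Fin.append_left, Fin.append_right]
        simp only [mul_add, Finset.sum_add_distrib, Finset.mul_sum, Finset.sum_mul, mul_assoc]
        congr 1
        simp only [Matrix.mul_apply, Finset.sum_mul, mul_assoc]
        rw [Finset.sum_comm]
      set z : Fin n → ℝ := x + X₀ *ᵥ y with hzdef
      have haz : a = z ⬝ᵥ ((A₀ᵀ * A₀) *ᵥ z) := by
        have h9 : a = (C₀ *ᵥ v) ⬝ᵥ (C₀ *ᵥ v) := by
          rw [hadef, ← Matrix.mulVec_mulVec, Matrix.dotProduct_mulVec]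
          congr 1
          have := Matrix.star_mulVec C₀ v
          rw [star_trivial, star_trivial] at this
          exact this.symm
        have h10 : z ⬝ᵥ ((A₀ᵀ * A₀) *ᵥ z) = (A₀ *ᵥ z) ⬝ᵥ (A₀ *ᵥ z) := by
          rw [← Matrix.conjTranspose_eq_transpose_of_trivial, ← Matrix.mulVec_mulVec,
            Matrix.dotProduct_mulVec]
          congr 1
          have := Matrix.star_mulVec A₀ z
          rw [star_trivial, star_trivial] at this
          exact this.symm
        rw [h9, hzv, h10]
      have hxy2 : x ⬝ᵥ (X₀ *ᵥ y) = y ⬝ᵥ y := by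
        rw [Matrix.dotProduct_mulVec]
        congr 1
        rw [← hXy, Matrix.mulVec_transpose]
      have hzz : z ⬝ᵥ z = x ⬝ᵥ x + 2 * (y ⬝ᵥ y) + (X₀ *ᵥ y) ⬝ᵥ (X₀ *ᵥ y) := by
        rw [hzdef, add_dotProduct, dotProduct_add, dotProduct_add, hxy2,
          dotProduct_comm (X₀ *ᵥ y) x, hxy2]
        ring
      have hbxy : b = x ⬝ᵥ x + y ⬝ᵥ y := by
        rw [hbdef]
        show (dotProduct v v) = _
        rw [dotProduct, Fin.sum_univ_add]
        simp [dotProduct, hxdef, hydef]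
      have hyy : 0 ≤ y ⬝ᵥ y := by
        have := dotProduct_star_self_nonneg y; rwa [star_trivial] at this
      have hXyy : 0 ≤ (X₀ *ᵥ y) ⬝ᵥ (X₀ *ᵥ y) := by
        have := dotProduct_star_self_nonneg (X₀ *ᵥ y); rwa [star_trivial] at this
      clear_value lmin
      have halb : lmin * b ≤ a := by
        have h11 := hlmin_le z
        have hbz : b ≤ z ⬝ᵥ z := by rw [hzz, hbxy]; linarith
        have h12 : lmin * b ≤ lmin * (z ⬝ᵥ z) := mul_le_mul_of_nonneg_left hbz hlmin.le
        rw [haz]; linarith [h11]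
      exact half_bound key halb hb hlmin hle1
    -- rank computation
    have hrankA : A₀.rank = n := by
      have h1 : (A₀ᴴ * A₀).rank = A₀.rank := Matrix.rank_conjTranspose_mul_self A₀
      rw [Matrix.conjTranspose_eq_transpose_of_trivial] at h1
      rw [← h1, Matrix.rank_of_isUnit _ hAu, Fintype.card_fin]
    have hC₀fact : C₀ = A₀ * (Matrix.of fun (i : Fin n) (j : Fin (n + d)) =>
        Fin.append (fun r : Fin n => if i = r then (1 : ℝ) else 0) (fun s : Fin d => X₀ i s) j) := by
      ext i j
      rw [Matrix.mul_apply]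
      show Fin.append (A₀ i) ((A₀ * X₀) i) j = _
      refine Fin.addCases (fun r => ?_) (fun s => ?_) j
      · rw [Fin.append_left]
        simp only [Matrix.of_apply, Fin.append_left, mul_ite, mul_one, mul_zero]
        simp [Finset.sum_ite_eq']
      · rw [Fin.append_right]
        simp only [Matrix.of_apply, Fin.append_right]
        rw [Matrix.mul_apply]
    set P : Matrix (Fin (n + d)) (Fin n) ℝ := Matrix.of fun (k : Fin (n + d)) (j : Fin n) =>
        Fin.append (fun r : Fin n => if r = j then (1 : ℝ) else 0) (fun _ : Fin d => (0 : ℝ)) k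
      with hPdef
    have hA₀fact : A₀ = C₀ * P := by
      ext i j
      rw [Matrix.mul_apply]
      show A₀ i j = ∑ k : Fin (n + d), (Fin.append (A₀ i) ((A₀ * X₀) i)) k * P k j
      rw [Fin.sum_univ_add]
      simp only [hPdef, Matrix.of_apply, Fin.append_left, Fin.append_right, mul_ite, mul_one,
        mul_zero, Finset.sum_ite_eq', Finset.mem_univ, if_true, Finset.sum_const_zero, add_zero]
    have hrankC : C₀.rank = n := by
      refine le_antisymm ?_ ?_
      · rw [hC₀fact]
        exact (Matrix.rank_mul_le_left _ _).trans (le_of_eq hrankA)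
      · have h2 := Matrix.rank_mul_le_left C₀ P
        rw [← hA₀fact, hrankA] at h2
        exact h2
    have hrankK : (S⁻¹ * (C₀ᴴ * C₀) * S⁻¹).rank = n := by
      rw [Matrix.rank_mul_eq_left_of_isUnit_det (S⁻¹) (S⁻¹ * (C₀ᴴ * C₀)) hSidet,
        Matrix.rank_mul_eq_right_of_isUnit_det (S⁻¹) (C₀ᴴ * C₀) hSidet,
        Matrix.rank_conjTranspose_mul_self, hrankC]
    have hcardZ : (Finset.univ.filter (fun i : Fin (n + d) => hK.eigenvalues i = 0)).card = d := by
      have h2 := Fintype.card_subtype_compl (fun i : Fin (n + d) => hK.eigenvalues i ≠ 0)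
      rw [← hK.rank_eq_card_non_zero_eigs, hrankK, Fintype.card_fin] at h2
      have h3 : Fintype.card {i // hK.eigenvalues i = 0}
          = Fintype.card {i : Fin (n + d) // ¬ hK.eigenvalues i ≠ 0} :=
        Fintype.card_congr (Equiv.subtypeEquivRight fun i => (not_not).symm)
      rw [← Fintype.card_subtype, h3, h2]
      omega
    have hvals : ∀ j, sortedEig hK j = 0 ∨ 1 / 2 ≤ sortedEig hK j :=
      fun j => (hdich (Tuple.sort hK.eigenvalues j)).1
    have hle1' : ∀ j, sortedEig hK j ≤ 1 := fun j => (hdich (Tuple.sort hK.eigenvalues j)).2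
    have hZcard' : (Finset.univ.filter (fun j : Fin (n + d) => sortedEig hK j = 0)).card = d := by
      have h4 : Fintype.card {j : Fin (n + d) // sortedEig hK j = 0}
          = Fintype.card {i : Fin (n + d) // hK.eigenvalues i = 0} :=
        Fintype.card_congr ((Tuple.sort hK.eigenvalues).subtypeEquiv fun j => Iff.rfl)
      rw [Fintype.card_subtype, Fintype.card_subtype] at h4
      rw [h4, hcardZ]
    refine ⟨?_, ?_, ?_⟩
    · intro j hj
      exact NormAux.mono_zero_prefix (NormAux.sortedEig_mono hK) hvals (le_of_eq hZcard'.symm) hj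
    · intro j hj
      exact ⟨NormAux.mono_half_suffix (NormAux.sortedEig_mono hK) hvals (le_of_eq hZcard') hj,
        hle1' j⟩
    · have hNinv : N⁻¹ = S⁻¹ * S⁻¹ := by rw [← hS2, Matrix.mul_inv_rev]
      calc Matrix.trace (C₀ * N⁻¹ * C₀ᴴ) = Matrix.trace (C₀ᴴ * (C₀ * N⁻¹)) :=
            Matrix.trace_mul_comm _ _
        _ = Matrix.trace ((C₀ᴴ * C₀) * N⁻¹) := by rw [Matrix.mul_assoc]
        _ = Matrix.trace (((C₀ᴴ * C₀) * S⁻¹) * S⁻¹) := by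
            rw [hNinv, ← Matrix.mul_assoc]
        _ = Matrix.trace (S⁻¹ * ((C₀ᴴ * C₀) * S⁻¹)) := Matrix.trace_mul_comm _ _
        _ = Matrix.trace (S⁻¹ * (C₀ᴴ * C₀) * S⁻¹) := by rw [← Matrix.mul_assoc]
        _ = ∑ i, hK.eigenvalues i := NormAux.trace_eq_sum_eig hK
        _ = ∑ j, sortedEig hK j := (Equiv.sum_comp (Tuple.sort hK.eigenvalues) hK.eigenvalues).symm

  refine ⟨hNpd, hNXe, fun hN hK => ⟨(spec hN hK).1, (spec hN hK).2.1⟩, ?_⟩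
  have hN0 : N.PosSemidef := hNpd.posSemidef
  have hSh : ((hN0.sqrt)⁻¹).IsHermitian := hN0.posSemidef_sqrt.1.inv
  have hK0 : ((hN0.sqrt)⁻¹ * (C₀ᴴ * C₀) * (hN0.sqrt)⁻¹).IsHermitian := by
    have h := Matrix.isHermitian_mul_mul_conjTranspose ((hN0.sqrt)⁻¹) hMpsd.1
    rwa [hSh] at h
  obtain ⟨hz, hhalf, htr⟩ := spec hN0 hK0
  have hcard2 : (Finset.univ.filter (fun j : Fin (n + d) => ¬ ((j : ℕ) < d))).card = n := by
    have e : {j : Fin (n + d) // (j : ℕ) < d} ≃ Fin d :=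
      { toFun := fun j => ⟨j.1.1, j.2⟩
        invFun := fun i => ⟨⟨i.1, lt_of_lt_of_le i.2 (Nat.le_add_left d n)⟩, i.2⟩
        left_inv := fun j => rfl
        right_inv := fun i => rfl }
    have h1 : (Finset.univ.filter (fun j : Fin (n + d) => (j : ℕ) < d)).card = d := by
      rw [← Fintype.card_subtype, Fintype.card_congr e, Fintype.card_fin]
    have h2 := Finset.card_filter_add_card_filter_not
      (s := (Finset.univ : Finset (Fin (n + d)))) (p := fun j : Fin (n + d) => (j : ℕ) < d)
    rw [h1, Finset.card_univ, Fintype.card_fin] at h2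
    omega
  have hsum : Matrix.trace (C₀ * N⁻¹ * C₀ᴴ)
      = ∑ j ∈ Finset.univ.filter (fun j : Fin (n + d) => ¬ ((j : ℕ) < d)), sortedEig hK0 j := by
    rw [htr, ← Finset.sum_filter_add_sum_filter_not Finset.univ
      (fun j : Fin (n + d) => (j : ℕ) < d) (sortedEig hK0)]
    have hzero : ∑ j ∈ Finset.univ.filter (fun j : Fin (n + d) => (j : ℕ) < d),
        sortedEig hK0 j = 0 :=
      Finset.sum_eq_zero fun j hj => hz j (Finset.mem_filter.mp hj).2
    rw [hzero, zero_add]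
  constructor
  · rw [hsum]
    have hlow := Finset.card_nsmul_le_sum
      (Finset.univ.filter (fun j : Fin (n + d) => ¬ ((j : ℕ) < d))) (sortedEig hK0) (1 / 2 : ℝ)
      (fun j hj => (hhalf j (Nat.le_of_not_lt (Finset.mem_filter.mp hj).2)).1)
    rw [hcard2] at hlow
    calc (n : ℝ) / 2 = n • (1 / 2 : ℝ) := by rw [nsmul_eq_mul]; ring
      _ ≤ _ := hlow
  · rw [hsum]
    have hup := Finset.sum_le_card_nsmul
      (Finset.univ.filter (fun j : Fin (n + d) => ¬ ((j : ℕ) < d))) (sortedEig hK0) (1 : ℝ)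
      (fun j hj => (hhalf j (Nat.le_of_not_lt (Finset.mem_filter.mp hj).2)).2)
    rw [hcard2] at hup
    calc _ ≤ n • (1 : ℝ) := hup
      _ = (n : ℝ) := by rw [nsmul_eq_mul, mul_one]
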